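/- For the quotient Markov chain setup, the one-step transition probabilities of the projected stopped chain satisfy: for cells H_i ≠ H_{-1} and any H_j, P(π(η̄_{t+1}) = H_j | π(η̄_t) = H_i) = p^H(η, H_j) for any η ∈ H_i; and for H_i = H_{-1}, P(π(η̄_{t+1}) = H_j | π(η̄_t) = H_{-1}) = δ_{H_j, H_{-1}}. -/
import Mathlib


open scoped BigOperators

/-- One-step transition probabilities of the projected stopped chain.  With `pbar` the kernel of
the chain stopped upon hitting `π⁻¹(m)` and path probabilities computed from initial state `η₀`,
the joint probability `P(π(η̄_{t+1}) = j, π(η̄_t) = i)` equals `q i j` times the marginal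
probability `P(π(η̄_t) = i)`, where `q i j = p^H(η, H_j)` for any `η ∈ H_i` when `i ≠ m`, and
`q m j = δ_{j,m}`.  In other words, `P(π(η̄_{t+1}) = H_j | π(η̄_t) = H_i) = p^H(η, H_j)` for
`H_i ≠ H_{-1}`, and `= δ_{H_j, H_{-1}}` for `H_i = H_{-1}`. -/
theorem projected_stopped_chain_one_step
    {H S : Type*} [Fintype H] [Fintype S] [DecidableEq H] [DecidableEq S]
    (π : H → S) (hπ : Function.Surjective π) (m : S)
    (p : H → H → ℝ)
    (hp0 : ∀ a b, 0 ≤ p a b)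
    (hp1 : ∀ a, ∑ b, p a b = 1)
    (hcompat : ∀ i, i ≠ m → ∀ a b, π a = i → π b = i → ∀ j,
      (∑ c, if π c = j then p a c else 0) = ∑ c, if π c = j then p b c else 0)
    (q : S → S → ℝ)
    (hq : ∀ i, i ≠ m → ∀ a, π a = i → ∀ j, q i j = ∑ c, if π c = j then p a c else 0)
    (hqm : ∀ j, q m j = if j = m then 1 else 0)
    (η₀ : H) (hη₀ : π η₀ ≠ m)
    (pbar : H → H → ℝ)
    (hpbar : ∀ a b, pbar a b = if π a = m then (if b = a then 1 else 0) else p a b)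
    (t : ℕ) (i j : S) :
    (∑ g : Fin (t + 2) → H,
        (if g 0 = η₀ ∧ π (g ⟨t, by omega⟩) = i ∧ π (g ⟨t + 1, by omega⟩) = j then
          ∏ u : Fin (t + 1), pbar (g u.castSucc) (g u.succ) else 0)) =
      q i j *
        ∑ g : Fin (t + 1) → H,
          (if g 0 = η₀ ∧ π (g ⟨t, by omega⟩) = i then
            ∏ u : Fin t, pbar (g u.castSucc) (g u.succ) else 0) := by
  classical
  -- Key lemma: summing the last step gives `q i j`.
  have key : ∀ a : H, π a = i →
      (∑ x, (if π x = j then pbar a x else 0)) = q i j := by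
    intro a ha
    by_cases him : i = m
    · subst him
      rw [hqm]
      have h1 : ∀ x, (if π x = j then pbar a x else 0)
          = if x = a then (if j = i then 1 else 0) else 0 := by
        intro x
        rw [hpbar, if_pos ha]
        by_cases hx : x = a
        · subst hx
          by_cases hj : π x = j
          · have hji : j = i := by rw [← hj, ha]
            simp [hj, hji]
          · have hji : j ≠ i := by rintro rfl; exact hj ha
            simp [hj, hji]
        · simp [hx]
      simp only [h1]
      simp
    · have hne : π a ≠ m := by rw [ha]; exact him
      rw [hq i him a ha j]
      apply Finset.sum_congr rfl
      intro x _
      rw [hpbar, if_neg hne]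
  -- Split off the last step of each path.
  have hmain :
      (∑ g : Fin (t + 2) → H,
        (if g 0 = η₀ ∧ π (g ⟨t, by omega⟩) = i ∧ π (g ⟨t + 1, by omega⟩) = j then
          ∏ u : Fin (t + 1), pbar (g u.castSucc) (g u.succ) else 0))
      = ∑ pr : H × (Fin (t + 1) → H),
          (if pr.2 0 = η₀ ∧ π (pr.2 ⟨t, by omega⟩) = i ∧ π pr.1 = j then
            (∏ u : Fin t, pbar (pr.2 u.castSucc) (pr.2 u.succ)) * pbar (pr.2 ⟨t, by omega⟩) pr.1
          else 0) := by
    refine (Fintype.sum_equiv (Fin.snocEquiv (fun _ : Fin (t + 2) => H))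
      _ _ ?_).symm
    rintro ⟨x, g⟩
    have e0 : (0 : Fin (t + 2)) = Fin.castSucc 0 := rfl
    have et : (⟨t, by omega⟩ : Fin (t + 2)) = Fin.castSucc ⟨t, by omega⟩ := rfl
    have et1 : (⟨t + 1, by omega⟩ : Fin (t + 2)) = Fin.last (t + 1) := rfl
    have elast : (Fin.last t).castSucc = (⟨t, by omega⟩ : Fin (t + 1)).castSucc := rfl
    have elast' : (Fin.last t).succ = Fin.last (t + 1) := rfl
    have hl : Fin.last t = (⟨t, by omega⟩ : Fin (t + 1)) := rfl
    have hs : (⟨t, by omega⟩ : Fin (t + 1)).succ = Fin.last (t + 1) := rfl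
    simp only [Fin.snocEquiv_apply, e0, et, et1, Fin.snoc_castSucc, Fin.snoc_last,
      Fin.prod_univ_castSucc, Fin.succ_castSucc, elast, elast', hl, hs]
  rw [hmain, Fintype.sum_prod_type]
  dsimp only
  rw [Finset.sum_comm]
  rw [Finset.mul_sum]
  apply Finset.sum_congr rfl
  intro g _
  by_cases hg : g 0 = η₀ ∧ π (g ⟨t, by omega⟩) = i
  · have hsum : ∑ x : H,
        (if g 0 = η₀ ∧ π (g ⟨t, by omega⟩) = i ∧ π x = j then
          (∏ u : Fin t, pbar (g u.castSucc) (g u.succ)) * pbar (g ⟨t, by omega⟩) x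
        else 0)
        = (∏ u : Fin t, pbar (g u.castSucc) (g u.succ)) *
            ∑ x, (if π x = j then pbar (g ⟨t, by omega⟩) x else 0) := by
      rw [Finset.mul_sum]
      apply Finset.sum_congr rfl
      intro x _
      by_cases hx : π x = j
      · simp [hg.1, hg.2, hx]
      · simp [hx]
    rw [hsum, key _ hg.2, if_pos hg]
    ring
  · rw [if_neg hg]
    have : ∀ x : H,
        (if g 0 = η₀ ∧ π (g ⟨t, by omega⟩) = i ∧ π x = j then
          (∏ u : Fin t, pbar (g u.castSucc) (g u.succ)) * pbar (g ⟨t, by omega⟩) x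
        else 0) = 0 := by
      intro x
      rw [if_neg]
      rintro ⟨h1, h2, _⟩
      exact hg ⟨h1, h2⟩
    simp [this]
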